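/- Let A be a finite nonempty set, X the simplex in ℝ^A with interior X° (points with all coordinates positive), v : X → ℝ^A, and x* ∈ X a GESS of v. Let h be twice continuously differentiable on an open set containing X, with Hessian H(y) positive definite at each y ∈ X°. Let x : I → X° be differentiable with x'(t) = V(x(t)), where V(y) is the H(y)-projection of H(y)⁻¹ v(y) onto ℝ₀^A = {z ∈ ℝ^A : ∑_α z_α = 0}. Then for each t, (d/dt) D_h(x*, x(t)) = v(x(t))·(x(t) − x*) ≤ 0, with equality if and only if x(t) = x*. -/

import Mathlib

open Matrix

noncomputable section

/-- The relative interior of the simplex (all coordinates positive, summing to one). -/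
def intSimplex (A : Type*) [Fintype A] : Set (A → ℝ) :=
  {x | (∀ α, 0 < x α) ∧ (∑ α, x α) = 1}

/-- The quadratic form `wᵀ G w = ‖w‖_G²` associated to a matrix `G`. -/
def qform {A : Type*} [Fintype A] (G : Matrix A A ℝ) (w : A → ℝ) : ℝ :=
  w ⬝ᵥ G.mulVec w

/-- `V` is the `G`-projection of `w` onto `C`. -/
def IsGProj {A : Type*} [Fintype A] (G : Matrix A A ℝ) (C : Set (A → ℝ))
    (w V : A → ℝ) : Prop :=
  V ∈ C ∧ ∀ z ∈ C, qform G (w - V) ≤ qform G (w - z)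

/-- The Hessian matrix of `h` at `y`. -/
def hessMat {A : Type*} [Fintype A] [DecidableEq A] (h : (A → ℝ) → ℝ) (y : A → ℝ) :
    Matrix A A ℝ :=
  Matrix.of fun α β => fderiv ℝ (fderiv ℝ h) y (Pi.single α 1) (Pi.single β 1)

lemma linexp {A : Type*} [Fintype A] [DecidableEq A]
    (L : (A → ℝ) →L[ℝ] ℝ) (w : A → ℝ) : L w = ∑ α, w α * L (Pi.single α 1) := by
  have hw : w = ∑ α, w α • (Pi.single α (1:ℝ) : A → ℝ) := by
    funext j; simp [Pi.single_apply, Finset.sum_apply]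
  conv_lhs => rw [hw]
  rw [map_sum]
  exact Finset.sum_congr rfl fun α _ => by rw [L.map_smul]; rfl

lemma bilin_expand {A : Type*} [Fintype A] [DecidableEq A]
    (B : (A → ℝ) →L[ℝ] (A → ℝ) →L[ℝ] ℝ) (u d : A → ℝ) :
    B u d = ∑ α, u α * ∑ β, d β * B (Pi.single α 1) (Pi.single β 1) := by
  have h1 : B u d = (B.flip d) u := rfl
  rw [h1, linexp]
  exact Finset.sum_congr rfl fun α _ => by
    rw [show (B.flip d) (Pi.single α 1) = B (Pi.single α 1) d from rfl,
      linexp (B (Pi.single α 1)) d]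

lemma symm_dot {A : Type*} [Fintype A] (G : Matrix A A ℝ)
    (hs : ∀ α β, G α β = G β α) (a b : A → ℝ) :
    a ⬝ᵥ G.mulVec b = b ⬝ᵥ G.mulVec a := by
  simp only [dotProduct, mulVec, Finset.mul_sum]
  rw [Finset.sum_comm]
  exact Finset.sum_congr rfl fun α _ => Finset.sum_congr rfl fun β _ => by
    rw [hs β α]; ring

lemma proj_orth {A : Type*} [Fintype A] (G : Matrix A A ℝ) (hG : G.PosDef)
    (hs : ∀ α β, G α β = G β α) (w V : A → ℝ)
    (hp : IsGProj G {z : A → ℝ | (∑ α, z α) = 0} w V)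
    (z : A → ℝ) (hz : (∑ α, z α) = 0) : (w - V) ⬝ᵥ G.mulVec z = 0 := by
  set u := w - V with hu
  by_contra hne
  set s := u ⬝ᵥ G.mulVec z with hsdef
  have hz0 : z ≠ 0 := by rintro rfl; simp [hsdef, dotProduct] at hne
  have hq : 0 < qform G z := by
    have := hG.dotProduct_mulVec_pos hz0
    simpa [qform] using this
  set t : ℝ := s / qform G z with ht
  have hmem : V + t • z ∈ {z : A → ℝ | (∑ α, z α) = 0} := by
    have := hp.1
    simp only [Set.mem_setOf_eq] at this ⊢
    simp [Finset.sum_add_distrib, this, ← Finset.mul_sum, hz]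
  have hle := hp.2 (V + t • z) hmem
  have hexp : w - (V + t • z) = u - t • z := by rw [hu]; abel
  rw [hexp] at hle
  have hq2 : qform G (u - t • z) =
      qform G u - t * (u ⬝ᵥ G.mulVec z) - t * (z ⬝ᵥ G.mulVec u) + t^2 * qform G z := by
    simp only [qform, Matrix.mulVec_sub, Matrix.mulVec_smul, sub_dotProduct,
      dotProduct_sub, smul_dotProduct, dotProduct_smul, smul_eq_mul]
    ring
  rw [hq2, symm_dot G hs z u, ← hsdef] at hle
  rw [ht] at hle
  have : qform G u - s^2 / qform G z < qform G u := by
    have hs2 : 0 < s^2 := by positivity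
    have : 0 < s^2 / qform G z := div_pos hs2 hq
    linarith
  have heq : qform G u - s / qform G z * s - s / qform G z * s + (s / qform G z)^2 * qform G z
      = qform G u - s^2 / qform G z := by
    field_simp
    ring
  rw [heq] at hle
  linarith

/-- the key Lyapunov computation for Hessian dynamics at a GESS.  Along an
interior solution `x'(t) = V(x(t))` of the Hessian dynamics (the `H(y)`-projection of
`H(y)⁻¹ v(y)` onto `ℝ₀^A`), the Bregman divergence `D_h(x*, x(t))` has time derivative
`v(x(t))·(x(t) − x*) ≤ 0`, with equality iff `x(t) = x*`. -/
theorem stmt_8 {A : Type*} [Fintype A] [DecidableEq A] [Nonempty A]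
    (v : (A → ℝ) → (A → ℝ)) (xstar : A → ℝ) (hxstarX : xstar ∈ stdSimplex ℝ A)
    (hGESS : ∀ y ∈ stdSimplex ℝ A,
      v y ⬝ᵥ (y - xstar) ≤ 0 ∧ (v y ⬝ᵥ (y - xstar) = 0 → y = xstar))
    (h : (A → ℝ) → ℝ) (U : Set (A → ℝ)) (hU : IsOpen U) (hXU : stdSimplex ℝ A ⊆ U)
    (hh : ContDiffOn ℝ 2 h U)
    (hpd : ∀ y ∈ intSimplex A, (hessMat h y).PosDef)
    (V : (A → ℝ) → (A → ℝ))
    (hV : ∀ y ∈ intSimplex A,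
      IsGProj (hessMat h y) {z : A → ℝ | (∑ α, z α) = 0}
        ((hessMat h y)⁻¹.mulVec (v y)) (V y))
    (x : ℝ → (A → ℝ)) (hxint : ∀ t : ℝ, x t ∈ intSimplex A)
    (hx' : ∀ t : ℝ, HasDerivAt x (V (x t)) t) :
    ∀ t : ℝ,
      HasDerivAt (fun s => h xstar - h (x s) - fderiv ℝ h (x s) (xstar - x s))
        (v (x t) ⬝ᵥ (x t - xstar)) t ∧
      v (x t) ⬝ᵥ (x t - xstar) ≤ 0 ∧
      (v (x t) ⬝ᵥ (x t - xstar) = 0 ↔ x t = xstar) := by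
  intro t
  set y := x t with hy
  have hyint : y ∈ intSimplex A := hxint t
  have hyX : y ∈ stdSimplex ℝ A := ⟨fun α => (hyint.1 α).le, hyint.2⟩
  set H := hessMat h y with hH
  have hpdH : H.PosDef := hpd y hyint
  have hs : ∀ α β, H α β = H β α := by
    intro α β
    have := hpdH.1
    have h2 := congrFun (congrFun this α) β
    simpa [Matrix.conjTranspose_apply] using h2.symm
  have hdz : (∑ α, (y - xstar) α) = 0 := by
    simp [Pi.sub_apply, Finset.sum_sub_distrib, hyint.2, hxstarX.2]
  -- key identity
  have horth := proj_orth H hpdH hs _ _ (hV y hyint) (y - xstar) hdz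
  have hHw : H.mulVec (H⁻¹.mulVec (v y)) = v y := by
    rw [Matrix.mulVec_mulVec, Matrix.mul_nonsing_inv _ hpdH.det_pos.ne'.isUnit,
      Matrix.one_mulVec]
  have hkey : v y ⬝ᵥ (y - xstar) = V y ⬝ᵥ H.mulVec (y - xstar) := by
    rw [sub_dotProduct, sub_eq_zero] at horth
    rw [← horth, symm_dot H hs, hHw, dotProduct_comm]
  -- derivative computation
  have hcd : ContDiffAt ℝ 2 h y := hh.contDiffAt (hU.mem_nhds (hXU hyX))
  have h1 : HasFDerivAt h (fderiv ℝ h y) y :=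
    (hcd.differentiableAt (by norm_num)).hasFDerivAt
  have hA : HasDerivAt (fun s => h (x s)) (fderiv ℝ h y (V y)) t :=
    h1.comp_hasDerivAt t (hx' t)
  have hcd1 : ContDiffAt ℝ 1 (fderiv ℝ h) y := hcd.fderiv_right (by norm_num)
  have h2 : HasFDerivAt (fderiv ℝ h) (fderiv ℝ (fderiv ℝ h) y) y :=
    (hcd1.differentiableAt one_ne_zero).hasFDerivAt
  have hB : HasDerivAt (fun s => fderiv ℝ h (x s)) (fderiv ℝ (fderiv ℝ h) y (V y)) t :=
    h2.comp_hasDerivAt t (hx' t)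
  have hC : HasDerivAt (fun s => xstar - x s) (-(V y)) t := (hx' t).const_sub xstar
  have hD : HasDerivAt (fun s => fderiv ℝ h (x s) (xstar - x s))
      (fderiv ℝ (fderiv ℝ h) y (V y) (xstar - y) + fderiv ℝ h y (-(V y))) t :=
    hB.clm_apply hC
  have hφ : HasDerivAt (fun s => h xstar - h (x s) - fderiv ℝ h (x s) (xstar - x s))
      (-(fderiv ℝ h y (V y)) -
        (fderiv ℝ (fderiv ℝ h) y (V y) (xstar - y) + fderiv ℝ h y (-(V y)))) t :=
    (hA.const_sub (h xstar)).sub hD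
  have hbil : fderiv ℝ (fderiv ℝ h) y (V y) (y - xstar) = V y ⬝ᵥ H.mulVec (y - xstar) := by
    rw [bilin_expand]
    refine Finset.sum_congr rfl fun α _ => ?_
    congr 1
    simp [Matrix.mulVec, dotProduct, hH, hessMat, mul_comm]
  refine ⟨?_, (hGESS y hyX).1, ⟨(hGESS y hyX).2, fun he => by simp [he]⟩⟩
  convert hφ using 1
  rw [hkey, ← hbil]
  have : fderiv ℝ (fderiv ℝ h) y (V y) (xstar - y)
      = -(fderiv ℝ (fderiv ℝ h) y (V y) (y - xstar)) := by
    rw [← map_neg]; congr 1; abel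
  rw [this, map_neg]
  ring
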